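/- Let U, V, X, Y, Z1 be random variables on finite alphabets such that U → V → X → (Y,Z1) is a Markov chain (i.e., (Y,Z1) is conditionally independent of (U,V) given X, and X is conditionally independent of U given V) and X → Y → Z1 is a Markov chain. Then I(V;Y|U) − I(V;Z1|U) ≤ I(X;Y) − I(X;Z1). -/

import Mathlib

open scoped BigOperators
noncomputable section

/-- A probability mass function on a finite type. -/
def IsPMF {α : Type*} [Fintype α] (p : α → ℝ) : Prop :=
  (∀ a, 0 ≤ p a) ∧ ∑ a, p a = 1

/-- Mutual information (in bits) of a joint pmf on `α × β`. -/
def mutInfo {α β : Type*} [Fintype α] [Fintype β] (p : α × β → ℝ) : ℝ :=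
  ∑ ab : α × β,
    p ab * Real.logb 2 (p ab / ((∑ b, p (ab.1, b)) * (∑ a, p (a, ab.2))))

/-- Conditional mutual information `I(A;B|C)` (in bits) of a joint pmf on `α × β × γ`,
where the conditioning variable is the third coordinate. -/
def condMutInfo {α β γ : Type*} [Fintype α] [Fintype β] [Fintype γ]
    (p : α × β × γ → ℝ) : ℝ :=
  ∑ x : α × β × γ,
    p x * Real.logb 2
      (((∑ a, ∑ b, p (a, b, x.2.2)) * p x) /
        ((∑ b, p (x.1, b, x.2.2)) * (∑ a, p (a, x.2.1, x.2.2))))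

set_option linter.unusedSectionVars false
namespace S13
variable {U V X Y Z : Type} [Fintype U] [Fintype V] [Fintype X] [Fintype Y] [Fintype Z]

lemma c0 {α β : Type} [Fintype α] [Fintype β] (f : α → β → ℝ) :
    ∑ a, ∑ b, f a b = ∑ b, ∑ a, f a b := Finset.sum_comm
lemma c1 {α β γ : Type} [Fintype α] [Fintype β] [Fintype γ] (f : α → β → γ → ℝ) :
    ∑ a, ∑ b, ∑ c, f a b c = ∑ a, ∑ c, ∑ b, f a b c :=
  Finset.sum_congr rfl fun _ _ => Finset.sum_comm
lemma c2 {α β γ δ : Type} [Fintype α] [Fintype β] [Fintype γ] [Fintype δ]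
    (f : α → β → γ → δ → ℝ) :
    ∑ a, ∑ b, ∑ c, ∑ d, f a b c d = ∑ a, ∑ b, ∑ d, ∑ c, f a b c d :=
  Finset.sum_congr rfl fun _ _ => Finset.sum_congr rfl fun _ _ => Finset.sum_comm
lemma c3 {α β γ δ ε : Type} [Fintype α] [Fintype β] [Fintype γ] [Fintype δ] [Fintype ε]
    (f : α → β → γ → δ → ε → ℝ) :
    ∑ a, ∑ b, ∑ c, ∑ d, ∑ e, f a b c d e = ∑ a, ∑ b, ∑ c, ∑ e, ∑ d, f a b c d e :=
  Finset.sum_congr rfl fun _ _ => Finset.sum_congr rfl fun _ _ =>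
    Finset.sum_congr rfl fun _ _ => Finset.sum_comm

variable (p : U × V × X × Y × Z → ℝ)

def mXY (x : X) (y : Y) : ℝ := ∑ u, ∑ v, ∑ z, p (u, v, x, y, z)
def mX (x : X) : ℝ := ∑ y, ∑ u, ∑ v, ∑ z, p (u, v, x, y, z)
def mY (y : Y) : ℝ := ∑ x, ∑ u, ∑ v, ∑ z, p (u, v, x, y, z)
def mXZ (x : X) (z : Z) : ℝ := ∑ u, ∑ v, ∑ y, p (u, v, x, y, z)
def mZ (z : Z) : ℝ := ∑ x, ∑ u, ∑ v, ∑ y, p (u, v, x, y, z)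
def mUVY (u : U) (v : V) (y : Y) : ℝ := ∑ x, ∑ z, p (u, v, x, y, z)
def mU (u : U) : ℝ := ∑ v, ∑ y, ∑ x, ∑ z, p (u, v, x, y, z)
def mUV (u : U) (v : V) : ℝ := ∑ y, ∑ x, ∑ z, p (u, v, x, y, z)
def mUY (u : U) (y : Y) : ℝ := ∑ v, ∑ x, ∑ z, p (u, v, x, y, z)
def mUVZ (u : U) (v : V) (z : Z) : ℝ := ∑ x, ∑ y, p (u, v, x, y, z)
def mUZ (u : U) (z : Z) : ℝ := ∑ v, ∑ x, ∑ y, p (u, v, x, y, z)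
def mYZ (y : Y) (z : Z) : ℝ := ∑ u, ∑ v, ∑ x, p (u, v, x, y, z)
def mUVX (u : U) (v : V) (x : X) : ℝ := ∑ y, ∑ z, p (u, v, x, y, z)
def mXYZ (x : X) (y : Y) (z : Z) : ℝ := ∑ u, ∑ v, p (u, v, x, y, z)
def mUVXZ (u : U) (v : V) (x : X) (z : Z) : ℝ := ∑ y, p (u, v, x, y, z)

def L1 (x : X) (y : Y) : ℝ := Real.logb 2 (mXY p x y / (mX p x * mY p y))
def L2 (x : X) (z : Z) : ℝ := Real.logb 2 (mXZ p x z / (mX p x * mZ p z))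
def L3 (u : U) (v : V) (y : Y) : ℝ :=
  Real.logb 2 (mU p u * mUVY p u v y / (mUV p u v * mUY p u y))
def L4 (u : U) (v : V) (z : Z) : ℝ :=
  Real.logb 2 (mU p u * mUVZ p u v z / (mUV p u v * mUZ p u z))

-- alt-order lemmas
lemma mX_alt (x : X) : (∑ z, ∑ u, ∑ v, ∑ y, p (u, v, x, y, z)) = mX p x := by
  rw [mX, c2, c1, c0, c1, c2]
lemma mX_alt2 (x : X) : (∑ u, ∑ v, ∑ y, ∑ z, p (u, v, x, y, z)) = mX p x := by
  rw [mX, c1, c0]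
lemma mY_alt (y : Y) : (∑ u, ∑ v, ∑ x, ∑ z, p (u, v, x, y, z)) = mY p y := by
  rw [mY, c1, c0]
lemma mU_alt (u : U) : (∑ v, ∑ z, ∑ x, ∑ y, p (u, v, x, y, z)) = mU p u := by
  rw [mU, c1, c2, c1]
lemma mUV_alt (u : U) (v : V) : (∑ z, ∑ x, ∑ y, p (u, v, x, y, z)) = mUV p u v := by
  rw [mUV, c1, c0, c1]
lemma mU_fold (u : U) : (∑ v, mUV p u v) = mU p u := rfl
lemma mXZ_alt (x : X) (z : Z) : (∑ y, ∑ u, ∑ v, p (u, v, x, y, z)) = mXZ p x z := by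
  rw [mXZ, c0, c1]
lemma mZ_alt (z : Z) : (∑ y, ∑ u, ∑ v, ∑ x, p (u, v, x, y, z)) = mZ p z := by
  rw [mZ, c2, c1, c0, c1, c2]

-- stage 1 + stage 2 : the four quantities as canonical 5-fold sums
lemma QXY : mutInfo (fun q : X × Y => ∑ u, ∑ v, ∑ z, p (u, v, q.1, q.2, z)) =
    ∑ u, ∑ v, ∑ x, ∑ y, ∑ z, p (u, v, x, y, z) * L1 p x y := by
  have h1 : mutInfo (fun q : X × Y => ∑ u, ∑ v, ∑ z, p (u, v, q.1, q.2, z)) =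
      ∑ x, ∑ y, mXY p x y * L1 p x y := by
    simp only [mutInfo, Fintype.sum_prod_type, L1, mXY, mX, mY]
  rw [h1]
  simp only [mXY, Finset.sum_mul]
  rw [c1, c0, c2, c1]

lemma QXZ : mutInfo (fun q : X × Z => ∑ u, ∑ v, ∑ y, p (u, v, q.1, y, q.2)) =
    ∑ u, ∑ v, ∑ x, ∑ y, ∑ z, p (u, v, x, y, z) * L2 p x z := by
  have h1 : mutInfo (fun q : X × Z => ∑ u, ∑ v, ∑ y, p (u, v, q.1, y, q.2)) =
      ∑ x, ∑ z, mXZ p x z * L2 p x z := by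
    simp only [mutInfo, Fintype.sum_prod_type, L2, mXZ]
    simp only [mX_alt, mZ]
  rw [h1]
  simp only [mXZ, Finset.sum_mul]
  rw [c1, c0, c2, c1, c3]

lemma QVYU : condMutInfo (fun t : V × Y × U => ∑ x, ∑ z, p (t.2.2, t.1, x, t.2.1, z)) =
    ∑ u, ∑ v, ∑ x, ∑ y, ∑ z, p (u, v, x, y, z) * L3 p u v y := by
  have h1 : condMutInfo (fun t : V × Y × U => ∑ x, ∑ z, p (t.2.2, t.1, x, t.2.1, z)) =
      ∑ v, ∑ y, ∑ u, mUVY p u v y * L3 p u v y := by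
    simp only [condMutInfo, Fintype.sum_prod_type, L3, mUVY, mU, mUV, mUY]
  rw [h1]
  simp only [mUVY, Finset.sum_mul]
  rw [c1, c0, c2]

lemma QVZU : condMutInfo (fun t : V × Z × U => ∑ x, ∑ y, p (t.2.2, t.1, x, y, t.2.1)) =
    ∑ u, ∑ v, ∑ x, ∑ y, ∑ z, p (u, v, x, y, z) * L4 p u v z := by
  have h1 : condMutInfo (fun t : V × Z × U => ∑ x, ∑ y, p (t.2.2, t.1, x, y, t.2.1)) =
      ∑ v, ∑ z, ∑ u, mUVZ p u v z * L4 p u v z := by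
    simp only [condMutInfo, Fintype.sum_prod_type, L4, mUVZ, mUZ]
    simp only [mU_alt, mUV_alt, mU_fold]
  rw [h1]
  simp only [mUVZ, Finset.sum_mul]
  rw [c1, c0, c2, c3]


-- helpers
lemma le_s {α : Type} [Fintype α] {f : α → ℝ} (h : ∀ a, 0 ≤ f a) (a : α) :
    f a ≤ ∑ b, f b := Finset.single_le_sum (fun i _ => h i) (Finset.mem_univ a)
lemma s_nn {α : Type} [Fintype α] {f : α → ℝ} (h : ∀ a, 0 ≤ f a) : 0 ≤ ∑ a, f a :=
  Finset.sum_nonneg fun i _ => h i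

variable (hp0 : ∀ t, 0 ≤ p t)
include hp0

lemma mYZ_nn (y : Y) (z : Z) : 0 ≤ mYZ p y z :=
  s_nn fun _ => s_nn fun _ => s_nn fun _ => hp0 _
lemma mUVY_nn (u : U) (v : V) (y : Y) : 0 ≤ mUVY p u v y :=
  s_nn fun _ => s_nn fun _ => hp0 _
lemma mUVZ_nn (u : U) (v : V) (z : Z) : 0 ≤ mUVZ p u v z :=
  s_nn fun _ => s_nn fun _ => hp0 _
lemma mUZ_nn (u : U) (z : Z) : 0 ≤ mUZ p u z :=
  s_nn fun _ => s_nn fun _ => s_nn fun _ => hp0 _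
lemma mUY_nn (u : U) (y : Y) : 0 ≤ mUY p u y :=
  s_nn fun _ => s_nn fun _ => s_nn fun _ => hp0 _
lemma mZ_nn (z : Z) : 0 ≤ mZ p z :=
  s_nn fun _ => s_nn fun _ => s_nn fun _ => s_nn fun _ => hp0 _
lemma mY_nn (y : Y) : 0 ≤ mY p y :=
  s_nn fun _ => s_nn fun _ => s_nn fun _ => s_nn fun _ => hp0 _
lemma mXZ_nn (x : X) (z : Z) : 0 ≤ mXZ p x z :=
  s_nn fun _ => s_nn fun _ => s_nn fun _ => hp0 _
lemma mXY_nn (x : X) (y : Y) : 0 ≤ mXY p x y :=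
  s_nn fun _ => s_nn fun _ => s_nn fun _ => hp0 _
lemma mUVXZ_nn (u : U) (v : V) (x : X) (z : Z) : 0 ≤ mUVXZ p u v x z :=
  s_nn fun _ => hp0 _

-- lower bounds: p t ≤ marginal
lemma le_mXY (u : U) (v : V) (x : X) (y : Y) (z : Z) :
    p (u, v, x, y, z) ≤ mXY p x y :=
  calc p (u, v, x, y, z) ≤ ∑ z', p (u, v, x, y, z') :=
        le_s (f := fun z' => p (u, v, x, y, z')) (fun _ => hp0 _) z
    _ ≤ ∑ v', ∑ z', p (u, v', x, y, z') :=
        le_s (f := fun v' => ∑ z', p (u, v', x, y, z')) (fun _ => s_nn fun _ => hp0 _) v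
    _ ≤ mXY p x y :=
        le_s (f := fun u' => ∑ v', ∑ z', p (u', v', x, y, z'))
          (fun _ => s_nn fun _ => s_nn fun _ => hp0 _) u

lemma le_mX (u : U) (v : V) (x : X) (y : Y) (z : Z) :
    p (u, v, x, y, z) ≤ mX p x :=
  calc p (u, v, x, y, z) ≤ mXY p x y := le_mXY p hp0 u v x y z
    _ ≤ mX p x := le_s (f := fun y' => mXY p x y') (fun y' => mXY_nn p hp0 x y') y

lemma le_mY (u : U) (v : V) (x : X) (y : Y) (z : Z) :
    p (u, v, x, y, z) ≤ mY p y :=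
  calc p (u, v, x, y, z) ≤ mXY p x y := le_mXY p hp0 u v x y z
    _ ≤ mY p y := le_s (f := fun x' => mXY p x' y) (fun x' => mXY_nn p hp0 x' y) x

lemma le_mXZ (u : U) (v : V) (x : X) (y : Y) (z : Z) :
    p (u, v, x, y, z) ≤ mXZ p x z :=
  calc p (u, v, x, y, z) ≤ ∑ y', p (u, v, x, y', z) :=
        le_s (f := fun y' => p (u, v, x, y', z)) (fun _ => hp0 _) y
    _ ≤ ∑ v', ∑ y', p (u, v', x, y', z) :=
        le_s (f := fun v' => ∑ y', p (u, v', x, y', z)) (fun _ => s_nn fun _ => hp0 _) v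
    _ ≤ mXZ p x z :=
        le_s (f := fun u' => ∑ v', ∑ y', p (u', v', x, y', z))
          (fun _ => s_nn fun _ => s_nn fun _ => hp0 _) u

lemma le_mZ (u : U) (v : V) (x : X) (y : Y) (z : Z) :
    p (u, v, x, y, z) ≤ mZ p z :=
  calc p (u, v, x, y, z) ≤ mXZ p x z := le_mXZ p hp0 u v x y z
    _ ≤ mZ p z := le_s (f := fun x' => mXZ p x' z) (fun x' => mXZ_nn p hp0 x' z) x

lemma le_mUVY (u : U) (v : V) (x : X) (y : Y) (z : Z) :
    p (u, v, x, y, z) ≤ mUVY p u v y :=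
  calc p (u, v, x, y, z) ≤ ∑ z', p (u, v, x, y, z') :=
        le_s (f := fun z' => p (u, v, x, y, z')) (fun _ => hp0 _) z
    _ ≤ mUVY p u v y :=
        le_s (f := fun x' => ∑ z', p (u, v, x', y, z')) (fun _ => s_nn fun _ => hp0 _) x

lemma le_mUY (u : U) (v : V) (x : X) (y : Y) (z : Z) :
    p (u, v, x, y, z) ≤ mUY p u y :=
  calc p (u, v, x, y, z) ≤ mUVY p u v y := le_mUVY p hp0 u v x y z
    _ ≤ mUY p u y := le_s (f := fun v' => mUVY p u v' y) (fun v' => mUVY_nn p hp0 u v' y) v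

lemma le_mUV (u : U) (v : V) (x : X) (y : Y) (z : Z) :
    p (u, v, x, y, z) ≤ mUV p u v :=
  calc p (u, v, x, y, z) ≤ mUVY p u v y := le_mUVY p hp0 u v x y z
    _ ≤ mUV p u v := le_s (f := fun y' => mUVY p u v y') (fun y' => mUVY_nn p hp0 u v y') y

lemma le_mU (u : U) (v : V) (x : X) (y : Y) (z : Z) :
    p (u, v, x, y, z) ≤ mU p u :=
  calc p (u, v, x, y, z) ≤ mUV p u v := le_mUV p hp0 u v x y z
    _ ≤ mU p u := le_s (f := fun v' => mUV p u v')
        (fun _ => s_nn fun _ => s_nn fun _ => s_nn fun _ => hp0 _) v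

lemma le_mUVZ (u : U) (v : V) (x : X) (y : Y) (z : Z) :
    p (u, v, x, y, z) ≤ mUVZ p u v z :=
  calc p (u, v, x, y, z) ≤ ∑ y', p (u, v, x, y', z) :=
        le_s (f := fun y' => p (u, v, x, y', z)) (fun _ => hp0 _) y
    _ ≤ mUVZ p u v z :=
        le_s (f := fun x' => ∑ y', p (u, v, x', y', z)) (fun _ => s_nn fun _ => hp0 _) x

lemma le_mUZ (u : U) (v : V) (x : X) (y : Y) (z : Z) :
    p (u, v, x, y, z) ≤ mUZ p u z :=
  calc p (u, v, x, y, z) ≤ mUVZ p u v z := le_mUVZ p hp0 u v x y z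
    _ ≤ mUZ p u z := le_s (f := fun v' => mUVZ p u v' z) (fun v' => mUVZ_nn p hp0 u v' z) v


omit hp0

-- derived Markov identities
lemma hA (hM1 : ∀ u v x y z,
      p (u, v, x, y, z) * (∑ u', ∑ v', ∑ y', ∑ z', p (u', v', x, y', z')) =
        (∑ y', ∑ z', p (u, v, x, y', z')) * (∑ u', ∑ v', p (u', v', x, y, z)))
    (u : U) (v : V) (x : X) (y : Y) (z : Z) :
    p (u, v, x, y, z) * mX p x = mUVX p u v x * mXYZ p x y z := by
  have h := hM1 u v x y z
  rw [mX_alt2] at h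
  exact h

lemma hB (hM3 : ∀ x y z,
      (∑ u, ∑ v, p (u, v, x, y, z)) * (∑ u, ∑ v, ∑ x', ∑ z', p (u, v, x', y, z')) =
        (∑ u, ∑ v, ∑ z', p (u, v, x, y, z')) * (∑ u, ∑ v, ∑ x', p (u, v, x', y, z)))
    (x : X) (y : Y) (z : Z) :
    mXYZ p x y z * mY p y = mXY p x y * mYZ p y z := by
  have h := hM3 x y z
  rw [mY_alt] at h
  exact h

lemma hC (hM1 : ∀ u v x y z,
      p (u, v, x, y, z) * (∑ u', ∑ v', ∑ y', ∑ z', p (u', v', x, y', z')) =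
        (∑ y', ∑ z', p (u, v, x, y', z')) * (∑ u', ∑ v', p (u', v', x, y, z)))
    (u : U) (v : V) (x : X) (z : Z) :
    mUVXZ p u v x z * mX p x = mUVX p u v x * mXZ p x z := by
  have h : ∑ y, (p (u, v, x, y, z) * mX p x) = ∑ y, (mUVX p u v x * mXYZ p x y z) :=
    Finset.sum_congr rfl fun y _ => hA p hM1 u v x y z
  rw [← Finset.sum_mul, ← Finset.mul_sum] at h
  simp only [mXYZ] at h
  rw [mXZ_alt] at h
  exact h

-- telescoping marginal sums
lemma sum_x_mUVXZ (u : U) (v : V) (z : Z) : ∑ x, mUVXZ p u v x z = mUVZ p u v z := rfl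
lemma sum_v_mUVY (u : U) (y : Y) : ∑ v, mUVY p u v y = mUY p u y := rfl
lemma sum_y_mYZ (z : Z) : ∑ y, mYZ p y z = mZ p z := by
  simp only [mYZ]; rw [c2, c1, c0, c1, c2]; rfl
lemma sum_p_one (hp1 : ∑ a, p a = 1) :
    ∑ u, ∑ v, ∑ x, ∑ y, ∑ z, p (u, v, x, y, z) = 1 := by
  simp only [Fintype.sum_prod_type] at hp1; exact hp1
lemma sum_uz (hp1 : ∑ a, p a = 1) : ∑ u, ∑ z, mUZ p u z = 1 := by
  simp only [mUZ]; rw [c1, c2, c3]; exact sum_p_one p hp1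

-- cancel lemmas
lemma cancel_le {a b x : ℝ} (ha : 0 ≤ a) (hb : 0 ≤ b) (hx : 0 ≤ x) :
    a * (x / (a * b)) ≤ x / b := by
  rcases eq_or_lt_of_le ha with h | h
  · rw [← h, zero_mul]; exact div_nonneg hx hb
  · rcases eq_or_lt_of_le hb with h2 | h2
    · simp [← h2]
    · have : a * (x / (a * b)) = x / b := by field_simp
      rw [this]

lemma cancel_le0 {a x : ℝ} (ha : 0 ≤ a) (hx : 0 ≤ x) : a * (x / a) ≤ x := by
  rcases eq_or_lt_of_le ha with h | h
  · rw [← h, zero_mul]; exact hx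
  · rw [mul_comm, div_mul_cancel₀ x (ne_of_gt h)]

def trm (u : U) (v : V) (x : X) (y : Y) (z : Z) : ℝ :=
  p (u, v, x, y, z) * (mY p y * mUZ p u z * mXZ p x z * mUVY p u v y) /
    (mXY p x y * mUVZ p u v z * mZ p z * mUY p u y)

lemma trm_le (hp0 : ∀ t, 0 ≤ p t)
    (hM1 : ∀ u v x y z,
      p (u, v, x, y, z) * (∑ u', ∑ v', ∑ y', ∑ z', p (u', v', x, y', z')) =
        (∑ y', ∑ z', p (u, v, x, y', z')) * (∑ u', ∑ v', p (u', v', x, y, z)))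
    (hM3 : ∀ x y z,
      (∑ u, ∑ v, p (u, v, x, y, z)) * (∑ u, ∑ v, ∑ x', ∑ z', p (u, v, x', y, z')) =
        (∑ u, ∑ v, ∑ z', p (u, v, x, y, z')) * (∑ u, ∑ v, ∑ x', p (u, v, x', y, z)))
    (u : U) (v : V) (x : X) (y : Y) (z : Z) :
    trm p u v x y z ≤
      mUVXZ p u v x z *
        (mYZ p y z * mUZ p u z * mUVY p u v y / (mUVZ p u v z * (mZ p z * mUY p u y))) := by
  rcases eq_or_lt_of_le (hp0 (u, v, x, y, z)) with h | h
  · have h0 : trm p u v x y z = 0 := by simp [trm, ← h]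
    rw [h0]
    exact mul_nonneg (mUVXZ_nn p hp0 u v x z)
      (div_nonneg
        (mul_nonneg (mul_nonneg (mYZ_nn p hp0 y z) (mUZ_nn p hp0 u z)) (mUVY_nn p hp0 u v y))
        (mul_nonneg (mUVZ_nn p hp0 u v z) (mul_nonneg (mZ_nn p hp0 z) (mUY_nn p hp0 u y))))
  · have hmX := lt_of_lt_of_le h (le_mX p hp0 u v x y z)
    have hmXY := lt_of_lt_of_le h (le_mXY p hp0 u v x y z)
    have hmUVZ := lt_of_lt_of_le h (le_mUVZ p hp0 u v x y z)
    have hmZ := lt_of_lt_of_le h (le_mZ p hp0 u v x y z)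
    have hmUY := lt_of_lt_of_le h (le_mUY p hp0 u v x y z)
    have key : p (u, v, x, y, z) * (mY p y * mXZ p x z) =
        mUVXZ p u v x z * (mXY p x y * mYZ p y z) := by
      have h1 := hA p hM1 u v x y z
      have h2 := hB p hM3 x y z
      have h3 := hC p hM1 u v x z
      have h4 : p (u, v, x, y, z) * (mY p y * mXZ p x z) * mX p x =
          mUVXZ p u v x z * (mXY p x y * mYZ p y z) * mX p x := by
        linear_combination (mY p y * mXZ p x z) * h1 + (mUVX p u v x * mXZ p x z) * h2 -
          (mXY p x y * mYZ p y z) * h3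
      exact mul_right_cancel₀ (ne_of_gt hmX) h4
    refine le_of_eq ?_
    rw [trm]
    field_simp
    linear_combination (mUZ p u z * mUVY p u v y) * key

lemma sum_trm_le_one (hp0 : ∀ t, 0 ≤ p t) (hp1 : ∑ a, p a = 1)
    (hM1 : ∀ u v x y z,
      p (u, v, x, y, z) * (∑ u', ∑ v', ∑ y', ∑ z', p (u', v', x, y', z')) =
        (∑ y', ∑ z', p (u, v, x, y', z')) * (∑ u', ∑ v', p (u', v', x, y, z)))
    (hM3 : ∀ x y z,
      (∑ u, ∑ v, p (u, v, x, y, z)) * (∑ u, ∑ v, ∑ x', ∑ z', p (u, v, x', y, z')) =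
        (∑ u, ∑ v, ∑ z', p (u, v, x, y, z')) * (∑ u, ∑ v, ∑ x', p (u, v, x', y, z))) :
    ∑ u, ∑ v, ∑ x, ∑ y, ∑ z, trm p u v x y z ≤ 1 := by
  calc ∑ u, ∑ v, ∑ x, ∑ y, ∑ z, trm p u v x y z
      = ∑ u, ∑ z, ∑ y, ∑ v, ∑ x, trm p u v x y z := by rw [c3, c2, c1, c3, c2]
    _ ≤ ∑ u, ∑ z, ∑ y, ∑ v, ∑ x, mUVXZ p u v x z *
          (mYZ p y z * mUZ p u z * mUVY p u v y /
            (mUVZ p u v z * (mZ p z * mUY p u y))) := by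
        refine Finset.sum_le_sum fun u _ => Finset.sum_le_sum fun z _ =>
          Finset.sum_le_sum fun y _ => Finset.sum_le_sum fun v _ =>
          Finset.sum_le_sum fun x _ => ?_
        exact trm_le p hp0 hM1 hM3 u v x y z
    _ = ∑ u, ∑ z, ∑ y, ∑ v, mUVZ p u v z *
          (mYZ p y z * mUZ p u z * mUVY p u v y /
            (mUVZ p u v z * (mZ p z * mUY p u y))) := by
        refine Finset.sum_congr rfl fun u _ => Finset.sum_congr rfl fun z _ =>
          Finset.sum_congr rfl fun y _ => Finset.sum_congr rfl fun v _ => ?_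
        rw [← Finset.sum_mul, sum_x_mUVXZ]
    _ ≤ ∑ u, ∑ z, ∑ y, ∑ v, mUVY p u v y *
          (mYZ p y z * mUZ p u z / (mZ p z * mUY p u y)) := by
        refine Finset.sum_le_sum fun u _ => Finset.sum_le_sum fun z _ =>
          Finset.sum_le_sum fun y _ => Finset.sum_le_sum fun v _ => ?_
        refine le_trans (cancel_le (mUVZ_nn p hp0 u v z)
          (mul_nonneg (mZ_nn p hp0 z) (mUY_nn p hp0 u y))
          (mul_nonneg (mul_nonneg (mYZ_nn p hp0 y z) (mUZ_nn p hp0 u z))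
            (mUVY_nn p hp0 u v y))) (le_of_eq (by ring))
    _ = ∑ u, ∑ z, ∑ y, mUY p u y *
          (mYZ p y z * mUZ p u z / (mZ p z * mUY p u y)) := by
        refine Finset.sum_congr rfl fun u _ => Finset.sum_congr rfl fun z _ =>
          Finset.sum_congr rfl fun y _ => ?_
        rw [← Finset.sum_mul, sum_v_mUVY]
    _ ≤ ∑ u, ∑ z, ∑ y, mYZ p y z * (mUZ p u z / mZ p z) := by
        refine Finset.sum_le_sum fun u _ => Finset.sum_le_sum fun z _ =>
          Finset.sum_le_sum fun y _ => ?_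
        refine le_trans (le_of_eq (by ring : mUY p u y *
            (mYZ p y z * mUZ p u z / (mZ p z * mUY p u y)) =
          mUY p u y * (mYZ p y z * mUZ p u z / (mUY p u y * mZ p z)))) ?_
        refine le_trans (cancel_le (mUY_nn p hp0 u y) (mZ_nn p hp0 z)
          (mul_nonneg (mYZ_nn p hp0 y z) (mUZ_nn p hp0 u z))) (le_of_eq (by ring))
    _ = ∑ u, ∑ z, mZ p z * (mUZ p u z / mZ p z) := by
        refine Finset.sum_congr rfl fun u _ => Finset.sum_congr rfl fun z _ => ?_
        rw [← Finset.sum_mul, sum_y_mYZ]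
    _ ≤ ∑ u, ∑ z, mUZ p u z := by
        refine Finset.sum_le_sum fun u _ => Finset.sum_le_sum fun z _ => ?_
        exact cancel_le0 (mZ_nn p hp0 z) (mUZ_nn p hp0 u z)
    _ = 1 := sum_uz p hp1


lemma pointwise (hp0 : ∀ t, 0 ≤ p t) (u : U) (v : V) (x : X) (y : Y) (z : Z) :
    (p (u, v, x, y, z) - trm p u v x y z) / Real.log 2 ≤
      p (u, v, x, y, z) * L1 p x y - p (u, v, x, y, z) * L2 p x z -
        p (u, v, x, y, z) * L3 p u v y + p (u, v, x, y, z) * L4 p u v z := by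
  rcases eq_or_lt_of_le (hp0 (u, v, x, y, z)) with h | h
  · have h0 : trm p u v x y z = 0 := by simp [trm, ← h]
    rw [h0, ← h]
    simp
  · have hmX := lt_of_lt_of_le h (le_mX p hp0 u v x y z)
    have hmY := lt_of_lt_of_le h (le_mY p hp0 u v x y z)
    have hmZ := lt_of_lt_of_le h (le_mZ p hp0 u v x y z)
    have hmU := lt_of_lt_of_le h (le_mU p hp0 u v x y z)
    have hmUV := lt_of_lt_of_le h (le_mUV p hp0 u v x y z)
    have hmXY := lt_of_lt_of_le h (le_mXY p hp0 u v x y z)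
    have hmXZ := lt_of_lt_of_le h (le_mXZ p hp0 u v x y z)
    have hmUY := lt_of_lt_of_le h (le_mUY p hp0 u v x y z)
    have hmUZ := lt_of_lt_of_le h (le_mUZ p hp0 u v x y z)
    have hmUVY := lt_of_lt_of_le h (le_mUVY p hp0 u v x y z)
    have hmUVZ := lt_of_lt_of_le h (le_mUVZ p hp0 u v x y z)
    have l2pos : (0:ℝ) < Real.log 2 := Real.log_pos one_lt_two
    set F : ℝ := mXY p x y * (mZ p z * (mUY p u y * mUVZ p u v z)) /
      (mY p y * (mXZ p x z * (mUVY p u v y * mUZ p u z))) with hFdef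
    have hFnum : (0:ℝ) < mXY p x y * (mZ p z * (mUY p u y * mUVZ p u v z)) :=
      mul_pos hmXY (mul_pos hmZ (mul_pos hmUY hmUVZ))
    have hFden : (0:ℝ) < mY p y * (mXZ p x z * (mUVY p u v y * mUZ p u z)) :=
      mul_pos hmY (mul_pos hmXZ (mul_pos hmUVY hmUZ))
    have hF : 0 < F := div_pos hFnum hFden
    have hlogsum :
        Real.log (mXY p x y / (mX p x * mY p y)) -
          Real.log (mXZ p x z / (mX p x * mZ p z)) -
          Real.log (mU p u * mUVY p u v y / (mUV p u v * mUY p u y)) +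
          Real.log (mU p u * mUVZ p u v z / (mUV p u v * mUZ p u z)) = Real.log F := by
      rw [hFdef,
        Real.log_div hmXY.ne' (mul_pos hmX hmY).ne',
        Real.log_div hmXZ.ne' (mul_pos hmX hmZ).ne',
        Real.log_div (mul_pos hmU hmUVY).ne' (mul_pos hmUV hmUY).ne',
        Real.log_div (mul_pos hmU hmUVZ).ne' (mul_pos hmUV hmUZ).ne',
        Real.log_div hFnum.ne' hFden.ne',
        Real.log_mul hmX.ne' hmY.ne', Real.log_mul hmX.ne' hmZ.ne',
        Real.log_mul hmU.ne' hmUVY.ne', Real.log_mul hmUV.ne' hmUY.ne',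
        Real.log_mul hmU.ne' hmUVZ.ne', Real.log_mul hmUV.ne' hmUZ.ne',
        Real.log_mul hmXY.ne' (mul_pos hmZ (mul_pos hmUY hmUVZ)).ne',
        Real.log_mul hmZ.ne' (mul_pos hmUY hmUVZ).ne',
        Real.log_mul hmUY.ne' hmUVZ.ne',
        Real.log_mul hmY.ne' (mul_pos hmXZ (mul_pos hmUVY hmUZ)).ne',
        Real.log_mul hmXZ.ne' (mul_pos hmUVY hmUZ).ne',
        Real.log_mul hmUVY.ne' hmUZ.ne']
      ring
    have hTrm : trm p u v x y z = p (u, v, x, y, z) * F⁻¹ := by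
      rw [trm, hFdef]
      field_simp
    have hle : 1 - F⁻¹ ≤ Real.log F := by
      have h2 := Real.log_le_sub_one_of_pos (inv_pos.2 hF)
      rw [Real.log_inv] at h2
      linarith
    calc (p (u, v, x, y, z) - trm p u v x y z) / Real.log 2
        = p (u, v, x, y, z) * ((1 - F⁻¹) / Real.log 2) := by rw [hTrm]; ring
      _ ≤ p (u, v, x, y, z) * (Real.log F / Real.log 2) := by
          refine mul_le_mul_of_nonneg_left ?_ (le_of_lt h)
          exact (div_le_div_iff_of_pos_right l2pos).mpr hle
      _ = p (u, v, x, y, z) * L1 p x y - p (u, v, x, y, z) * L2 p x z -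
            p (u, v, x, y, z) * L3 p u v y + p (u, v, x, y, z) * L4 p u v z := by
          simp only [L1, L2, L3, L4, Real.logb]
          rw [← hlogsum]
          ring

end S13

/-- if `U → V → X → (Y,Z₁)` and `X → Y → Z₁` are Markov chains then
`I(V;Y|U) − I(V;Z₁|U) ≤ I(X;Y) − I(X;Z₁)`. -/
theorem stmt13_conditional_data_processing
    {U V X Y Z : Type} [Fintype U] [Fintype V] [Fintype X] [Fintype Y] [Fintype Z]
    (p : U × V × X × Y × Z → ℝ) (hp : IsPMF p)
    -- (Y,Z₁) ⊥ (U,V) | X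
    (hMarkov1 : ∀ u v x y z,
      p (u, v, x, y, z) * (∑ u', ∑ v', ∑ y', ∑ z', p (u', v', x, y', z')) =
        (∑ y', ∑ z', p (u, v, x, y', z')) * (∑ u', ∑ v', p (u', v', x, y, z)))
    -- X ⊥ U | V
    (hMarkov2 : ∀ u v x,
      (∑ y, ∑ z, p (u, v, x, y, z)) * (∑ u', ∑ x', ∑ y, ∑ z, p (u', v, x', y, z)) =
        (∑ x', ∑ y, ∑ z, p (u, v, x', y, z)) * (∑ u', ∑ y, ∑ z, p (u', v, x, y, z)))
    -- X → Y → Z₁: Z₁ ⊥ X | Y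
    (hMarkov3 : ∀ x y z,
      (∑ u, ∑ v, p (u, v, x, y, z)) * (∑ u, ∑ v, ∑ x', ∑ z', p (u, v, x', y, z')) =
        (∑ u, ∑ v, ∑ z', p (u, v, x, y, z')) * (∑ u, ∑ v, ∑ x', p (u, v, x', y, z))) :
    condMutInfo (fun t : V × Y × U => ∑ x, ∑ z, p (t.2.2, t.1, x, t.2.1, z)) -
      condMutInfo (fun t : V × Z × U => ∑ x, ∑ y, p (t.2.2, t.1, x, y, t.2.1)) ≤
    mutInfo (fun q : X × Y => ∑ u, ∑ v, ∑ z, p (u, v, q.1, q.2, z)) -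
      mutInfo (fun q : X × Z => ∑ u, ∑ v, ∑ y, p (u, v, q.1, y, q.2)) := by
  obtain ⟨hp0, hp1⟩ := hp
  rw [S13.QVYU p, S13.QVZU p, S13.QXY p, S13.QXZ p]
  have l2pos : (0:ℝ) < Real.log 2 := Real.log_pos one_lt_two
  have H : ∑ u, ∑ v, ∑ x, ∑ y, ∑ z,
        ((p (u, v, x, y, z) - S13.trm p u v x y z) / Real.log 2) ≤
      ∑ u, ∑ v, ∑ x, ∑ y, ∑ z,
        (p (u, v, x, y, z) * S13.L1 p x y - p (u, v, x, y, z) * S13.L2 p x z -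
          p (u, v, x, y, z) * S13.L3 p u v y + p (u, v, x, y, z) * S13.L4 p u v z) := by
    refine Finset.sum_le_sum fun u _ => Finset.sum_le_sum fun v _ =>
      Finset.sum_le_sum fun x _ => Finset.sum_le_sum fun y _ =>
      Finset.sum_le_sum fun z _ => ?_
    exact S13.pointwise p hp0 u v x y z
  have E1 : ∑ u, ∑ v, ∑ x, ∑ y, ∑ z,
        ((p (u, v, x, y, z) - S13.trm p u v x y z) / Real.log 2) =
      (1 - ∑ u, ∑ v, ∑ x, ∑ y, ∑ z, S13.trm p u v x y z) / Real.log 2 := by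
    simp only [← Finset.sum_div, Finset.sum_sub_distrib]
    rw [S13.sum_p_one p hp1]
  have E2 : ∑ u, ∑ v, ∑ x, ∑ y, ∑ z,
        (p (u, v, x, y, z) * S13.L1 p x y - p (u, v, x, y, z) * S13.L2 p x z -
          p (u, v, x, y, z) * S13.L3 p u v y + p (u, v, x, y, z) * S13.L4 p u v z) =
      (∑ u, ∑ v, ∑ x, ∑ y, ∑ z, p (u, v, x, y, z) * S13.L1 p x y) -
        (∑ u, ∑ v, ∑ x, ∑ y, ∑ z, p (u, v, x, y, z) * S13.L2 p x z) -
        (∑ u, ∑ v, ∑ x, ∑ y, ∑ z, p (u, v, x, y, z) * S13.L3 p u v y) +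
        (∑ u, ∑ v, ∑ x, ∑ y, ∑ z, p (u, v, x, y, z) * S13.L4 p u v z) := by
    simp only [Finset.sum_sub_distrib, Finset.sum_add_distrib]
  have htrm := S13.sum_trm_le_one p hp0 hp1 hMarkov1 hMarkov3
  have hnn : 0 ≤ (1 - ∑ u, ∑ v, ∑ x, ∑ y, ∑ z, S13.trm p u v x y z) / Real.log 2 :=
    div_nonneg (by linarith) (le_of_lt l2pos)
  rw [E1] at H
  rw [E2] at H
  linarith
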